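/- Let α₁, α₂ be non-zero complex numbers with mα₁ + nα₂ = 0 for relatively prime positive integers m, n. The number of ℤ-orbits (under cyclic shift) of cyclically irreducible sequences in M(α₁,α₂) is (1/(m+n)) · C(m+n, m). -/

import Mathlib

def wsum (α₁ α₂ : ℂ) (l : List Bool) : ℂ :=
  (l.map (fun b => if b then α₂ else α₁)).sum

def CycRed (α₁ α₂ : ℂ) (l : List Bool) : Prop :=
  ∃ (k : ℕ) (a b : List Bool), a ≠ [] ∧ b ≠ [] ∧
    wsum α₁ α₂ a = 0 ∧ wsum α₁ α₂ b = 0 ∧ l.rotate k = a ++ b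

def CycIrrSet (α₁ α₂ : ℂ) : Type :=
  {l : List Bool // l ≠ [] ∧ wsum α₁ α₂ l = 0 ∧ ¬ CycRed α₁ α₂ l}

def shiftRel (α₁ α₂ : ℂ) (x y : CycIrrSet α₁ α₂) : Prop :=
  ∃ k : ℕ, x.1.rotate k = y.1


namespace S10
open List

open List

lemma count_add_length (l : List Bool) : l.count false + l.count true = l.length := by
  induction l with
  | nil => simp
  | cons b t ih => cases b <;> simp [List.count_cons] <;> omega

lemma wsum_eq (α₁ α₂ : ℂ) (l : List Bool) :
    wsum α₁ α₂ l = (l.count false : ℂ) * α₁ + (l.count true : ℂ) * α₂ := by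
  induction l with
  | nil => simp [wsum]
  | cons b t ih =>
      cases b <;> simp [wsum, List.count_cons] at ih ⊢ <;> rw [ih] <;> ring

section
variable {α₁ α₂ : ℂ} {m n : ℕ} (hα₁ : α₁ ≠ 0) (hn : 0 < n)
  (hmn : (m : ℂ) * α₁ + (n : ℂ) * α₂ = 0)

include hα₁ hn hmn in
lemma wsum_zero_iff (l : List Bool) :
    wsum α₁ α₂ l = 0 ↔ n * l.count false = m * l.count true := by
  rw [wsum_eq]
  set c₀ := l.count false
  set c₁ := l.count true
  have hncast : (n : ℂ) ≠ 0 := Nat.cast_ne_zero.mpr hn.ne'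
  constructor
  · intro h
    have h2 : (n : ℂ) * ((c₀ : ℂ) * α₁ + (c₁ : ℂ) * α₂) = 0 := by rw [h, mul_zero]
    have h3 : ((n : ℂ) * c₀ - (m : ℂ) * c₁) * α₁ = 0 := by
      have : (n : ℂ) * α₂ = -((m : ℂ) * α₁) := by linear_combination hmn
      linear_combination h2 - (c₁ : ℂ) * this
    have h4 : (n : ℂ) * c₀ = (m : ℂ) * c₁ := by
      rcases mul_eq_zero.mp h3 with h | h
      · exact sub_eq_zero.mp h
      · exact absurd h hα₁
    exact_mod_cast h4
  · intro h
    have h4 : (n : ℂ) * c₀ = (m : ℂ) * c₁ := by exact_mod_cast h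
    have hα₂' : (n : ℂ) * α₂ = -((m : ℂ) * α₁) := by linear_combination hmn
    have : (n : ℂ) * ((c₀ : ℂ) * α₁ + (c₁ : ℂ) * α₂) = 0 := by
      linear_combination α₁ * h4 + (c₁ : ℂ) * hα₂'
    rcases mul_eq_zero.mp this with h | h
    · exact absurd h hncast
    · exact h

end



def isum (m n : ℕ) (l : List Bool) : ℤ :=
  (n : ℤ) * l.count false - (m : ℤ) * l.count true

lemma isum_append (m n : ℕ) (a b : List Bool) :
    isum m n (a ++ b) = isum m n a + isum m n b := by
  simp [isum, List.count_append]; ring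

lemma isum_rotate (m n : ℕ) (l : List Bool) (k : ℕ) :
    isum m n (l.rotate k) = isum m n l := by
  simp [isum, (l.rotate_perm k).count_eq]

lemma exists_split {m n : ℕ} (hm : 0 < m) (hn : 0 < n) {l : List Bool} {t : ℕ}
    (h₀ : l.count false = t * m) (h₁ : l.count true = t * n) (ht : 2 ≤ t)
    (hlen : l.length = t * (m + n)) :
    ∃ j a b, a ≠ [] ∧ b ≠ [] ∧ isum m n a = 0 ∧ isum m n b = 0 ∧ l.rotate j = a ++ b := by
  set N := m + n with hN
  set L := l.length with hL
  have hNpos : 0 < N := by omega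
  have h2N : 2 * N ≤ L := by
    have : 2 * N ≤ t * N := Nat.mul_le_mul_right _ ht
    omega
  have hNL : N < L := by omega
  have hLpos : 0 < L := by omega
  have hNcast : (N : ℤ) = (m : ℤ) + (n : ℤ) := by rw [hN]; push_cast; ring
  set ll := l ++ l with hll
  have hlll : ll.length = 2 * L := by simp [hll, ← hL]; ring
  set S : ℕ → ℤ := fun j => isum m n (ll.take j) with hS
  have hS0 : S 0 = 0 := by simp [hS, isum]
  have hisuml : isum m n l = 0 := by
    simp [isum, h₀, h₁]; push_cast; ring
  have hstep : ∀ j, j < 2 * L → ∃ e : ℤ, (e = n ∨ e = -m) ∧ S (j + 1) = S j + e := by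
    intro j hj
    have hj' : j < ll.length := by omega
    have htk : ll.take (j + 1) = ll.take j ++ [ll[j]] := by
      rw [List.take_succ, List.getElem?_eq_getElem hj']
      rfl
    refine ⟨isum m n [ll[j]], ?_, ?_⟩
    · rcases Bool.eq_false_or_eq_true ll[j] with h | h <;> rw [h] <;> simp [isum]
    · rw [hS]; simp only; rw [htk, isum_append]
  have hper : ∀ j, j ≤ L → S (L + j) = S j := by
    intro j hj
    have h1 : ll.take (L + j) = l ++ l.take j := by
      rw [hll, List.take_append]
      rw [List.take_of_length_le (by omega : l.length ≤ L + j)]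
      congr 1
      congr 1
      omega
    have h2 : ll.take j = l.take j := by
      rw [hll, List.take_append_of_le_length (by omega : j ≤ l.length)]
    rw [hS]; simp only
    rw [h1, h2, isum_append, hisuml, zero_add]
  have hdvd : ∀ j, j ≤ 2 * L → (N : ℤ) ∣ S j - j * n := by
    intro j hj
    induction j with
    | zero => simp [hS0]
    | succ j ih =>
        obtain ⟨e, he, hstepj⟩ := hstep j (by omega)
        obtain ⟨c, hc⟩ := ih (by omega)
        rcases he with he | he
        · exact ⟨c, by rw [hstepj, he]; push_cast; linarith⟩
        · exact ⟨c - 1, by rw [hstepj, he]; push_cast; push_cast at hc; linarith [hNcast]⟩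
  set D : ℕ → ℤ := fun j => S (j + N) - S j with hD
  have hDdvd : ∀ j, j + N ≤ 2 * L → (N : ℤ) ∣ D j := by
    intro j hj
    obtain ⟨c, hc⟩ := hdvd (j + N) hj
    obtain ⟨c', hc'⟩ := hdvd j (by omega)
    exact ⟨c - c' + n, by rw [hD]; simp only; push_cast at hc hc' ⊢; linarith⟩
  have hDL : D L = D 0 := by
    have e1 : S (L + N) = S N := hper N (by omega)
    have e2 : S L = S 0 := by simpa using hper 0 (by omega)
    show S (L + N) - S L = S (0 + N) - S 0
    rw [e1, e2, Nat.zero_add]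
  have hDsum : ∑ j ∈ Finset.range L, D j = 0 := by
    have e1 : ∑ j ∈ Finset.range (N + L), S j
        = ∑ j ∈ Finset.range N, S j + ∑ j ∈ Finset.range L, S (N + j) :=
      Finset.sum_range_add S N L
    have e2 : ∑ j ∈ Finset.range (L + N), S j
        = ∑ j ∈ Finset.range L, S j + ∑ j ∈ Finset.range N, S (L + j) :=
      Finset.sum_range_add S L N
    have e3 : ∑ j ∈ Finset.range N, S (L + j) = ∑ j ∈ Finset.range N, S j :=
      Finset.sum_congr rfl fun j hj => hper j (by simp at hj; omega)
    have e4 : ∑ j ∈ Finset.range L, S (N + j) = ∑ j ∈ Finset.range L, S j := by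
      have : ∑ j ∈ Finset.range (N + L), S j = ∑ j ∈ Finset.range (L + N), S j := by
        rw [Nat.add_comm]
      rw [e1, e2, e3] at this
      linarith
    have : ∑ j ∈ Finset.range L, D j
        = ∑ j ∈ Finset.range L, S (j + N) - ∑ j ∈ Finset.range L, S j := by
      rw [← Finset.sum_sub_distrib]
    rw [this, ← e4]
    have : ∑ j ∈ Finset.range L, S (j + N) = ∑ j ∈ Finset.range L, S (N + j) :=
      Finset.sum_congr rfl fun j _ => by rw [Nat.add_comm]
    rw [this]; ring
  have hDstep : ∀ j, j + 1 + N ≤ 2 * L → D (j + 1) - D j ≤ N ∧ -(N : ℤ) ≤ D (j + 1) - D j := by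
    intro j hj
    obtain ⟨e, he, hse⟩ := hstep j (by omega)
    obtain ⟨e', he', hse'⟩ := hstep (j + N) (by omega)
    have : D (j + 1) - D j = e' - e := by
      rw [hD]; simp only
      rw [show j + 1 + N = j + N + 1 from by omega, hse, hse']
      ring
    rw [this]
    rcases he with he | he <;> rcases he' with he' | he' <;> rw [he, he'] <;>
      push_cast <;> constructor <;> push_cast <;> linarith [hNcast]
  -- main claim: some D j = 0 with j < L
  have hmain : ∃ j, j < L ∧ D j = 0 := by
    by_contra hcon
    push_neg at hcon
    rcases lt_trichotomy (D 0) 0 with h0 | h0 | h0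
    · -- all negative
      have hallneg : ∀ j, j ≤ L → D j < 0 := by
        intro j
        induction j with
        | zero => intro _; exact h0
        | succ j ih =>
            intro hj
            have hdj : D j < 0 := ih (by omega)
            have hdvdj : (N : ℤ) ∣ D j := hDdvd j (by omega)
            have hDjN : D j ≤ -N := by
              rcases hdvdj with ⟨c, hc⟩
              have : c < 0 := by
                by_contra hc'
                push_neg at hc'
                nlinarith [hc]
              nlinarith
            have := (hDstep j (by omega)).1
            have hle : D (j + 1) ≤ 0 := by linarith
            rcases eq_or_lt_of_le hle with heq | hlt
            · exfalso
              rcases Nat.lt_or_ge (j+1) L with hl | hl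
              · exact hcon (j+1) hl heq
              · have : j + 1 = L := by omega
                rw [this] at heq
                rw [hDL] at heq
                omega
            · exact hlt
      have : ∑ j ∈ Finset.range L, D j < 0 := by
        apply Finset.sum_neg
        · intro j hj
          exact hallneg j (by simp at hj; omega)
        · exact Finset.nonempty_range_iff.mpr (by omega)
      omega
    · exact hcon 0 hLpos h0
    · have hallpos : ∀ j, j ≤ L → 0 < D j := by
        intro j
        induction j with
        | zero => intro _; exact h0
        | succ j ih =>
            intro hj
            have hdj : 0 < D j := ih (by omega)
            have hdvdj : (N : ℤ) ∣ D j := hDdvd j (by omega)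
            have hDjN : (N : ℤ) ≤ D j := Int.le_of_dvd hdj hdvdj
            have := (hDstep j (by omega)).2
            have hge : 0 ≤ D (j + 1) := by linarith
            rcases eq_or_lt_of_le hge with heq | hlt
            · exfalso
              rcases Nat.lt_or_ge (j+1) L with hl | hl
              · exact hcon (j+1) hl heq.symm
              · have : j + 1 = L := by omega
                rw [this] at heq
                rw [hDL] at heq
                omega
            · exact hlt
      have : 0 < ∑ j ∈ Finset.range L, D j := by
        apply Finset.sum_pos
        · intro j hj
          exact hallpos j (by simp at hj; omega)
        · exact Finset.nonempty_range_iff.mpr (by omega)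
      omega
  obtain ⟨j, hjL, hDj⟩ := hmain
  -- now build the splitting
  have hSSj : S (j + N) = S j := by
    have : D j = S (j + N) - S j := rfl
    omega
  have hrot : l.rotate j = (ll.drop j).take L := by
    rw [List.rotate_eq_drop_append_take (by omega : j ≤ l.length)]
    rw [hll, List.drop_append_of_le_length (by omega : j ≤ l.length)]
    rw [List.take_append]
    rw [List.take_of_length_le (by simp only [List.length_drop]; omega : (l.drop j).length ≤ L)]
    congr 2
    simp
    omega
  set a := (l.rotate j).take N with ha
  set b := (l.rotate j).drop N with hb
  have hlena : a.length = N := by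
    rw [ha]; simp [List.length_take, List.length_rotate]; omega
  have hlenb : b.length = L - N := by
    rw [hb]; simp [List.length_drop, List.length_rotate]; rfl
  have haeq : a = (ll.drop j).take N := by
    rw [ha, hrot, List.take_take]
    congr 1
    omega
  have hisa : isum m n a = 0 := by
    have htk : ll.take (j + N) = ll.take j ++ (ll.drop j).take N := by
      rw [List.take_drop]
      conv_lhs => rw [← List.take_append_drop j (ll.take (j + N))]
      congr 1
      rw [List.take_take]
      congr 1
      omega
    have : S (j + N) = S j + isum m n ((ll.drop j).take N) := by
      rw [hS]; simp only; rw [htk, isum_append]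
    rw [haeq]
    omega
  have hisb : isum m n b = 0 := by
    have h1 : isum m n (l.rotate j) = 0 := by rw [isum_rotate]; exact hisuml
    have h2 : l.rotate j = a ++ b := (List.take_append_drop N (l.rotate j)).symm
    rw [h2, isum_append] at h1
    omega
  refine ⟨j, a, b, ?_, ?_, hisa, hisb, (List.take_append_drop N (l.rotate j)).symm⟩
  · intro h; rw [h] at hlena; simp at hlena; omega
  · intro h; rw [h] at hlenb; simp at hlenb; omega




lemma rotate_mul_self {α : Type*} {l : List α} {a : ℕ} (h : l.rotate a = l) (k : ℕ) :
    l.rotate (k * a) = l := by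
  induction k with
  | zero => simp
  | succ k ih =>
      have : l.rotate (k * a + a) = (l.rotate (k * a)).rotate a := (l.rotate_rotate _ _).symm
      rw [Nat.succ_mul, this, ih, h]

lemma rotate_gcd {α : Type*} {l : List α} : ∀ a b : ℕ, l.rotate a = l → l.rotate b = l →
    l.rotate (Nat.gcd a b) = l := by
  intro a
  induction a using Nat.strong_induction_on with
  | _ a ih =>
      intro b ha hb
      rcases Nat.eq_zero_or_pos a with h0 | h0
      · subst h0; simpa [Nat.gcd_zero_left] using hb
      · rw [Nat.gcd_rec a b]
        apply ih (b % a) (Nat.mod_lt _ h0) a ?_ ha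
        have hdiv : l.rotate (b / a * a) = l := rotate_mul_self ha _
        have : l.rotate (b / a * a + b % a) = l := by
          rw [Nat.div_add_mod' b a] at *
          exact hb
        rw [← l.rotate_rotate] at this
        rw [hdiv] at this
        exact this

lemma periodic_structure {α : Type*} : ∀ (q : ℕ) (l : List α) (g : ℕ), 0 < g →
    l.rotate g = l → l.length = q * g → l = (List.replicate q (l.take g)).flatten := by
  intro q
  induction q with
  | zero => intro l g _ _ hlen; simp at hlen ⊢; exact hlen
  | succ q ih =>
      intro l g hg hrot hlen
      have hgl : g ≤ l.length := by rw [hlen]; nlinarith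
      set p := l.take g with hp
      set l' := l.drop g with hl'
      have hsplit : l = p ++ l' := (List.take_append_drop g l).symm
      have hrot' : l' ++ p = l := by
        rw [← List.rotate_eq_drop_append_take hgl] at *
        exact hrot
      have hlenl' : l'.length = q * g := by
        rw [hl', List.length_drop, hlen]; ring_nf; omega
      have hlenp : p.length = g := by rw [hp, List.length_take]; omega
      -- p and l' commute: p ++ l' = l' ++ p
      have hcomm : p ++ l' = l' ++ p := by rw [← hsplit, hrot']
      rcases Nat.eq_zero_or_pos q with hq0 | hq0
      · have : l' = [] := by
          apply List.eq_nil_of_length_eq_zero; rw [hlenl', hq0]; ring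
        rw [hsplit, this]
        simp [hq0]
      · have hgl' : g ≤ l'.length := by rw [hlenl']; nlinarith
        have hpl' : l'.take g = p := by
          have : (p ++ l').take g = (l' ++ p).take g := by rw [hcomm]
          rw [List.take_append_of_le_length (by omega), List.take_append_of_le_length hgl'] at this
          rw [List.take_of_length_le (by omega)] at this
          exact this.symm
        have hrotl' : l'.rotate g = l' := by
          rw [List.rotate_eq_drop_append_take hgl']
          have hdrop : (p ++ l').drop g = (l' ++ p).drop g := by rw [hcomm]
          rw [List.drop_append_of_le_length (by omega), List.drop_append_of_le_length hgl'] at hdrop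
          rw [List.drop_of_length_le (by omega)] at hdrop
          simp at hdrop
          -- hdrop : l' = l'.drop g ++ p
          rw [hpl']
          exact hdrop.symm
        have := ih l' g hg hrotl' hlenl'
        rw [hpl'] at this
        calc l = p ++ l' := hsplit
        _ = p ++ (List.replicate q p).flatten := by rw [← this]
        _ = (List.replicate (q+1) p).flatten := by rw [List.replicate_succ, List.flatten_cons]

lemma count_flatten_replicate {α : Type*} [DecidableEq α] (q : ℕ) (p : List α) (x : α) :
    ((List.replicate q p).flatten).count x = q * p.count x := by
  induction q with
  | zero => simp
  | succ q ih => rw [List.replicate_succ, List.flatten_cons, List.count_append, ih]; ring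

lemma free_action {m n : ℕ} (hm : 0 < m) (hn : 0 < n) (hco : Nat.Coprime m n)
    {l : List Bool} (h₀ : l.count false = m) (h₁ : l.count true = n)
    {d : ℕ} (hd : 0 < d) (hdL : d < l.length) (hrot : l.rotate d = l) : False := by
  set L := l.length with hL
  set g := Nat.gcd d L with hg
  have hgpos : 0 < g := Nat.gcd_pos_of_pos_left _ hd
  have hrotg : l.rotate g = l := rotate_gcd d L hrot (l.rotate_length)
  have hgdvd : g ∣ L := Nat.gcd_dvd_right d L
  obtain ⟨q, hq⟩ := hgdvd
  have hstruct := periodic_structure q l g hgpos hrotg (by rw [← hL, hq]; ring)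
  have hc₀ : m = q * (l.take g).count false := by
    conv_lhs => rw [← h₀, hstruct]
    rw [count_flatten_replicate]
  have hc₁ : n = q * (l.take g).count true := by
    conv_lhs => rw [← h₁, hstruct]
    rw [count_flatten_replicate]
  have hq1 : q = 1 := Nat.eq_one_of_dvd_coprimes hco ⟨_, hc₀⟩ ⟨_, hc₁⟩
  have : g = L := by rw [hq, hq1, Nat.mul_one]
  have : g ≤ d := Nat.le_of_dvd hd (Nat.gcd_dvd_left d L)
  omega





lemma card_B (m n : ℕ) :
    Nat.card {l : List Bool // l.count false = m ∧ l.count true = n} = (m + n).choose n := by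
  classical
  have hlenB : ∀ l : List Bool, l.count false = m → l.count true = n → l.length = m + n :=
    fun l h0 h1 => by rw [← count_add_length, h0, h1]
  let F := {s : Finset (Fin (m + n)) // s.card = n}
  let tf : {l : List Bool // l.count false = m ∧ l.count true = n} → F := fun l =>
    ⟨Finset.univ.filter
        (fun i => List.Vector.get (⟨l.1, hlenB l.1 l.2.1 l.2.2⟩ : List.Vector Bool (m + n)) i = true), by
      exact (Fin.card_filter_univ_eq_vector_get_eq_count true
        (⟨l.1, hlenB l.1 l.2.1 l.2.2⟩ : List.Vector Bool (m + n))).trans l.2.2⟩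
  have hbij : Function.Bijective tf := by
    constructor
    · intro x y hxy
      apply Subtype.ext
      have hget : ∀ i, List.Vector.get (n := m + n) ⟨x.1, hlenB x.1 x.2.1 x.2.2⟩ i
          = List.Vector.get (n := m + n) ⟨y.1, hlenB y.1 y.2.1 y.2.2⟩ i := by
        intro i
        have h := congrArg (fun s : F => i ∈ s.1) hxy
        simp only [tf, Finset.mem_filter, Finset.mem_univ, true_and, eq_iff_iff] at h
        cases hx : List.Vector.get (⟨x.1, hlenB x.1 x.2.1 x.2.2⟩ : List.Vector Bool (m + n)) i <;>
            cases hy : List.Vector.get (⟨y.1, hlenB y.1 y.2.1 y.2.2⟩ : List.Vector Bool (m + n)) i <;>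
          rw [hx, hy] at h <;> simp_all
      have hv : (⟨x.1, hlenB x.1 x.2.1 x.2.2⟩ : List.Vector Bool (m + n))
          = ⟨y.1, hlenB y.1 y.2.1 y.2.2⟩ := List.Vector.ext hget
      exact congrArg List.Vector.toList hv
    · intro s
      set v : List.Vector Bool (m + n) := List.Vector.ofFn (fun i => decide (i ∈ s.1)) with hv
      have hct : v.toList.count true = n := by
        rw [← Fin.card_filter_univ_eq_vector_get_eq_count]
        have : ∀ i, v.get i = decide (i ∈ s.1) := fun i => List.Vector.get_ofFn _ i
        simp only [this, decide_eq_true_eq]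
        rw [Finset.filter_univ_mem]
        exact s.2
      have hlv : v.toList.length = m + n := v.toList_length
      have hcf : v.toList.count false = m := by
        have := count_add_length v.toList
        omega
      refine ⟨⟨v.toList, hcf, hct⟩, ?_⟩
      apply Subtype.ext
      show Finset.univ.filter _ = s.1
      ext i
      simp only [Finset.mem_filter, Finset.mem_univ, true_and]
      have hveq : (⟨v.toList, hlenB v.toList hcf hct⟩ : List.Vector Bool (m + n)) = v :=
        Subtype.ext rfl
      rw [hveq]
      have : v.get i = decide (i ∈ s.1) := List.Vector.get_ofFn _ i
      rw [this]
      simp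
  have := Nat.card_eq_of_bijective tf hbij
  rw [this, Nat.card_eq_fintype_card]
  show Fintype.card {s : Finset (Fin (m + n)) // s.card = n} = _
  rw [Fintype.card_finset_len, Fintype.card_fin]


section main
variable {α₁ α₂ : ℂ} {m n : ℕ}

lemma counts_factor {m n c₀ c₁ : ℕ} (hm : 0 < m) (hco : Nat.Coprime m n)
    (h : n * c₀ = m * c₁) : ∃ t, c₀ = t * m ∧ c₁ = t * n := by
  have hdvd : m ∣ c₀ := by
    have h1 : m ∣ c₀ * n := ⟨c₁, by rw [← h]; ring⟩
    exact (Nat.Coprime.dvd_of_dvd_mul_right hco h1)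
  obtain ⟨t, ht⟩ := hdvd
  refine ⟨t, by rw [ht]; ring, ?_⟩
  have h2 : m * (t * n) = m * c₁ := by rw [← h, ht]; ring
  exact (Nat.eq_of_mul_eq_mul_left hm h2).symm

lemma wsum_zero_iff_isum (hα₁ : α₁ ≠ 0) (hn : 0 < n)
    (hmn : (m : ℂ) * α₁ + (n : ℂ) * α₂ = 0) (l : List Bool) :
    wsum α₁ α₂ l = 0 ↔ isum m n l = 0 := by
  rw [wsum_zero_iff hα₁ hn hmn, isum, sub_eq_zero]
  constructor
  · intro h; exact_mod_cast h
  · intro h; exact_mod_cast h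

lemma mem_iff (hα₁ : α₁ ≠ 0) (hm : 0 < m) (hn : 0 < n) (hco : Nat.Coprime m n)
    (hmn : (m : ℂ) * α₁ + (n : ℂ) * α₂ = 0) (l : List Bool) :
    (l ≠ [] ∧ wsum α₁ α₂ l = 0 ∧ ¬ CycRed α₁ α₂ l) ↔
      (l.count false = m ∧ l.count true = n) := by
  constructor
  · rintro ⟨hne, hw, hnc⟩
    have hcnt := (wsum_zero_iff hα₁ hn hmn l).mp hw
    obtain ⟨t, ht₀, ht₁⟩ := counts_factor hm hco hcnt
    have hlen : l.length = t * (m + n) := by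
      rw [← count_add_length, ht₀, ht₁]; ring
    have htpos : 0 < t := by
      rcases Nat.eq_zero_or_pos t with h0 | h0
      · exfalso
        apply hne
        apply List.eq_nil_of_length_eq_zero
        rw [hlen, h0]; ring
      · exact h0
    have ht1 : t = 1 := by
      by_contra ht2
      have ht2' : 2 ≤ t := by omega
      obtain ⟨j, a, b, ha, hb, hia, hib, heq⟩ := exists_split hm hn ht₀ ht₁ ht2' hlen
      exact hnc ⟨j, a, b, ha, hb, (wsum_zero_iff_isum hα₁ hn hmn a).mpr hia,
        (wsum_zero_iff_isum hα₁ hn hmn b).mpr hib, heq⟩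
    subst ht1
    constructor
    · rw [ht₀]; ring
    · rw [ht₁]; ring
  · rintro ⟨h₀, h₁⟩
    have hlen : l.length = m + n := by rw [← count_add_length, h₀, h₁]
    refine ⟨?_, ?_, ?_⟩
    · intro h
      rw [h] at hlen
      simp at hlen
      omega
    · exact (wsum_zero_iff hα₁ hn hmn l).mpr (by rw [h₀, h₁]; ring)
    · rintro ⟨k, a, b, ha, hb, hwa, hwb, heq⟩
      have hca := (wsum_zero_iff hα₁ hn hmn a).mp hwa
      obtain ⟨t', ht₀, ht₁⟩ := counts_factor hm hco hca
      have hta : a.length = t' * (m + n) := by rw [← count_add_length, ht₀, ht₁]; ring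
      have ht'pos : 0 < t' := by
        rcases Nat.eq_zero_or_pos t' with h0 | h0
        · exfalso
          apply ha
          apply List.eq_nil_of_length_eq_zero
          rw [hta, h0]; ring
        · exact h0
      have h1 : (l.rotate k).length = m + n := by rw [List.length_rotate, hlen]
      have h2 : a.length + b.length = m + n := by
        rw [← List.length_append, ← heq, h1]
      have h3 : 0 < b.length := List.length_pos_iff.mpr hb
      have h4 : m + n ≤ a.length := by
        rw [hta]
        exact Nat.le_mul_of_pos_left _ ht'pos
      omega

end main

end S10

theorem stmt10 (α₁ α₂ : ℂ) (hα₁ : α₁ ≠ 0) (hα₂ : α₂ ≠ 0)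
    (m n : ℕ) (hm : 0 < m) (hn : 0 < n) (hco : Nat.Coprime m n)
    (hmn : (m : ℂ) * α₁ + (n : ℂ) * α₂ = 0) :
    Nat.card (Quot (shiftRel α₁ α₂)) * (m + n) = Nat.choose (m + n) m := by
  classical
  have hiff : ∀ l : List Bool, (l ≠ [] ∧ wsum α₁ α₂ l = 0 ∧ ¬ CycRed α₁ α₂ l) ↔
      (l.count false = m ∧ l.count true = n) := S10.mem_iff hα₁ hm hn hco hmn
  have hcnt : ∀ x : CycIrrSet α₁ α₂, x.1.count false = m ∧ x.1.count true = n :=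
    fun x => (hiff x.1).mp x.2
  have hlen : ∀ x : CycIrrSet α₁ α₂, x.1.length = m + n := fun x => by
    rw [← S10.count_add_length, (hcnt x).1, (hcnt x).2]
  have hrotmem : ∀ (x : CycIrrSet α₁ α₂) (k : ℕ),
      (x.1.rotate k ≠ [] ∧ wsum α₁ α₂ (x.1.rotate k) = 0 ∧ ¬ CycRed α₁ α₂ (x.1.rotate k)) := by
    intro x k
    rw [hiff]
    exact ⟨by rw [(x.1.rotate_perm k).count_eq]; exact (hcnt x).1,
      by rw [(x.1.rotate_perm k).count_eq]; exact (hcnt x).2⟩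
  have hequiv : Equivalence (shiftRel α₁ α₂) := by
    constructor
    · exact fun x => ⟨0, x.1.rotate_zero⟩
    · rintro x y ⟨k, hk⟩
      have hL : 0 < x.1.length := List.length_pos_iff.mpr x.2.1
      refine ⟨x.1.length - k % x.1.length, ?_⟩
      rw [← hk, List.rotate_rotate]
      have h1 := Nat.div_add_mod k x.1.length
      have h2 : k % x.1.length < x.1.length := Nat.mod_lt _ hL
      have h3 : k + (x.1.length - k % x.1.length)
          = x.1.length * (k / x.1.length) + x.1.length := by omega
      rw [h3, ← List.rotate_rotate, List.rotate_length_mul, List.rotate_length]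
    · rintro x y z ⟨k1, h1⟩ ⟨k2, h2⟩
      exact ⟨k1 + k2, by rw [← List.rotate_rotate, h1, h2]⟩
  have hmkeq : ∀ x y : CycIrrSet α₁ α₂,
      Quot.mk (shiftRel α₁ α₂) x = Quot.mk (shiftRel α₁ α₂) y → shiftRel α₁ α₂ x y :=
    fun x y h => (hequiv.eqvGen_iff).mp (Quot.eq.mp h)
  have haux : ∀ (x : CycIrrSet α₁ α₂) (k₁ k₂ : ℕ), k₂ < m + n → k₁ < k₂ →
      x.1.rotate k₁ = x.1.rotate k₂ → False := by
    intro x k₁ k₂ hk₂ hlt h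
    have hc1 : (x.1.rotate k₁).count false = m := by
      rw [(x.1.rotate_perm k₁).count_eq]; exact (hcnt x).1
    have hc2 : (x.1.rotate k₁).count true = n := by
      rw [(x.1.rotate_perm k₁).count_eq]; exact (hcnt x).2
    have hlen' : (x.1.rotate k₁).length = m + n := by
      rw [List.length_rotate, hlen x]
    have hrot' : (x.1.rotate k₁).rotate (k₂ - k₁) = x.1.rotate k₁ := by
      rw [List.rotate_rotate, show k₁ + (k₂ - k₁) = k₂ from by omega]
      exact h.symm
    exact S10.free_action hm hn hco hc1 hc2 (by omega) (by rw [hlen']; omega) hrot'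
  let f : ∀ q : Quot (shiftRel α₁ α₂),
      Fin (m + n) → {x : CycIrrSet α₁ α₂ // Quot.mk (shiftRel α₁ α₂) x = q} := fun q k =>
    ⟨⟨(Quot.out q).1.rotate k.1, hrotmem (Quot.out q) k.1⟩,
      (Quot.sound ⟨k.1, rfl⟩ : Quot.mk _ (Quot.out q) = _).symm.trans (Quot.out_eq q)⟩
  have hbijf : ∀ q, Function.Bijective (f q) := by
    intro q
    constructor
    · intro k₁ k₂ hk
      have h : (Quot.out q).1.rotate k₁.1 = (Quot.out q).1.rotate k₂.1 :=
        congrArg (fun z => z.1.1) hk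
      rcases Nat.lt_trichotomy k₁.1 k₂.1 with hlt | heq | hlt
      · exact absurd (haux _ _ _ k₂.2 hlt h) not_false
      · exact Fin.ext heq
      · exact absurd (haux _ _ _ k₁.2 hlt h.symm) not_false
    · rintro ⟨x, hx⟩
      have hmk : Quot.mk (shiftRel α₁ α₂) x = Quot.mk (shiftRel α₁ α₂) (Quot.out q) := by
        rw [hx, Quot.out_eq]
      obtain ⟨k, hk⟩ := hequiv.symm (hmkeq _ _ hmk)
      have hkN : k % (m + n) < m + n := Nat.mod_lt _ (by omega)
      refine ⟨⟨k % (m + n), hkN⟩, ?_⟩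
      apply Subtype.ext
      apply Subtype.ext
      show (Quot.out q).1.rotate (k % (m + n)) = x.1
      have : (Quot.out q).1.rotate (k % (m + n)) = (Quot.out q).1.rotate k := by
        conv_lhs => rw [← hlen (Quot.out q)]
        exact List.rotate_mod _ _
      rw [this, hk]
  have E2 : CycIrrSet α₁ α₂ ≃ Quot (shiftRel α₁ α₂) × Fin (m + n) :=
    ((Equiv.sigmaFiberEquiv (Quot.mk (shiftRel α₁ α₂))).symm.trans
      (Equiv.sigmaCongrRight (fun q => (Equiv.ofBijective (f q) (hbijf q)).symm))).trans
      (Equiv.sigmaEquivProd _ _)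
  have key : Nat.card (CycIrrSet α₁ α₂) = Nat.card (Quot (shiftRel α₁ α₂)) * (m + n) := by
    rw [Nat.card_congr E2, Nat.card_prod, Nat.card_eq_fintype_card (α := Fin (m + n)), Fintype.card_fin]
  have hcard : Nat.card (CycIrrSet α₁ α₂) = (m + n).choose m := by
    have e1 : CycIrrSet α₁ α₂ ≃ {l : List Bool // l.count false = m ∧ l.count true = n} :=
      Equiv.subtypeEquivRight hiff
    rw [Nat.card_congr e1, S10.card_B]
    have := Nat.choose_symm (show n ≤ m + n by omega)
    rw [show m + n - n = m from by omega] at this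
    exact this.symm
  rw [← key, hcard]
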